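/- arXiv:2101.09508 — 5 statements merged into one kernel-verified Lean document; each statement's English description precedes it below -/
import Mathlib

section
/- Let G be a topological group admitting a neighbourhood basis at the identity consisting of open subgroups, and let H be a dense subgroup of G. If U is a subgroup of H that is open in the subspace topology of H, then the closure of U in G is an open subgroup of G. -/
/-- Let `G` be a topological group admitting a neighbourhood basis at the identity consisting
of open subgroups, and let `H` be a dense subgroup of `G`.  If `U` is a subgroup of `H` that
is open in the subspace topology of `H`, then the closure of `U` in `G` is an open subgroup
of `G`. -/
theorem stmt_6 {G : Type*} [Group G] [TopologicalSpace G] [IsTopologicalGroup G]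
    (hbasis : (nhds (1 : G)).HasBasis (fun K : Subgroup G => IsOpen (K : Set G))
      (fun K : Subgroup G => (K : Set G)))
    (H : Subgroup G) (hH : Dense (H : Set G))
    (U : Subgroup H) (hU : IsOpen (U : Set H)) :
    IsOpen (((U.map H.subtype).topologicalClosure : Subgroup G) : Set G) := by
  -- U is open in H: get an open V in G with coe ⁻¹' V = U
  rw [isOpen_induced_iff] at hU
  obtain ⟨V, hVopen, hVU⟩ := hU
  have hV1 : V ∈ nhds (1 : G) := by
    refine hVopen.mem_nhds ?_
    have : ((1 : H) : G) ∈ V := by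
      have : (1 : H) ∈ (Subtype.val ⁻¹' V : Set H) := by rw [hVU]; exact U.one_mem
      exact this
    simpa using this
  obtain ⟨K, hKopen, hKV⟩ := hbasis.mem_iff.mp hV1
  -- K ∩ H ⊆ image of U
  have hKH : (K : Set G) ∩ (H : Set G) ⊆ ((U.map H.subtype : Subgroup G) : Set G) := by
    rintro x ⟨hxK, hxH⟩
    refine ⟨⟨x, hxH⟩, ?_, rfl⟩
    have : (⟨x, hxH⟩ : H) ∈ (Subtype.val ⁻¹' V : Set H) := hKV hxK
    rw [hVU] at this
    exact this
  -- K ⊆ closure (K ∩ H) ⊆ closure (image of U)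
  have hKc : (K : Set G) ⊆ closure (((U.map H.subtype : Subgroup G) : Set G)) := by
    intro x hx
    refine closure_mono hKH ?_
    rw [mem_closure_iff]
    intro W hWopen hxW
    obtain ⟨y, hyH, hyW⟩ := hH.exists_mem_open (hWopen.inter hKopen) ⟨x, hxW, hx⟩
    exact ⟨y, hyW.1, hyW.2, hyH⟩
  exact Subgroup.isOpen_of_mem_nhds _ (Filter.mem_of_superset (hKopen.mem_nhds K.one_mem) hKc)
end

section
/- Let H be a subgroup of the group of all permutations of ℕ such that every element of H has finite support (i.e., for each x ∈ H the set {i ∈ ℕ : x(i) ≠ i} is finite) and such that every orbit of the natural action of H on ℕ is finite. Then every element x of H has a finite conjugacy class in H, i.e., the set {h x h⁻¹ : h ∈ H} is finite (H is an FC-group). -/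
/-- Let `H` be a subgroup of the group of all permutations of `ℕ` such that every element of
`H` has finite support and every orbit of the natural action of `H` on `ℕ` is finite.
Then every element `x ∈ H` has a finite conjugacy class in `H`, i.e. `H` is an FC-group. -/
theorem stmt_8 (H : Subgroup (Equiv.Perm ℕ))
    (hsupp : ∀ x ∈ H, {i : ℕ | x i ≠ i}.Finite)
    (horb : ∀ a : ℕ, {b : ℕ | ∃ h ∈ H, h a = b}.Finite) :
    ∀ x ∈ H, {y : Equiv.Perm ℕ | ∃ h ∈ H, h * x * h⁻¹ = y}.Finite := by
  intro x hx
  have hS := hsupp x hx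
  set T : Set ℕ := ⋃ a ∈ {i : ℕ | x i ≠ i}, {b : ℕ | ∃ h ∈ H, h a = b} with hTdef
  have hT : T.Finite := Set.Finite.biUnion hS (fun a _ => horb a)
  -- every conjugate has support inside T
  have hsub : {y : Equiv.Perm ℕ | ∃ h ∈ H, h * x * h⁻¹ = y} ⊆
      {y : Equiv.Perm ℕ | ∀ i, y i ≠ i → i ∈ T} := by
    rintro y ⟨h, hh, rfl⟩ i hi
    have hyi : h (x (h⁻¹ i)) ≠ i := by simpa [Equiv.Perm.mul_apply] using hi
    have hmem : x (h⁻¹ i) ≠ h⁻¹ i := by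
      intro hc
      apply hyi
      rw [hc]
      exact Equiv.apply_symm_apply h i
    refine Set.mem_biUnion hmem ⟨h, hh, ?_⟩
    exact Equiv.apply_symm_apply h i
  -- permutations supported inside T form a finite set
  have hP : {y : Equiv.Perm ℕ | ∀ i, y i ≠ i → i ∈ T}.Finite := by
    haveI := hT.fintype
    classical
    set f : Equiv.Perm ℕ → (T → T) := fun y i =>
      if h : (y (i : ℕ)) ∈ T then ⟨y (i : ℕ), h⟩ else i with hf
    have hmapsto : ∀ y ∈ {y : Equiv.Perm ℕ | ∀ i, y i ≠ i → i ∈ T},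
        ∀ i : ℕ, i ∈ T → y i ∈ T := by
      intro y hy i hi
      by_cases hyi : y i = i
      · rwa [hyi]
      · exact hy (y i) (fun hc => hyi (y.injective hc))
    have hinj : Set.InjOn f {y : Equiv.Perm ℕ | ∀ i, y i ≠ i → i ∈ T} := by
      intro y1 hy1 y2 hy2 hfeq
      ext i
      by_cases hi : i ∈ T
      · have h1 : (y1 i) ∈ T := hmapsto y1 hy1 i hi
        have h2 : (y2 i) ∈ T := hmapsto y2 hy2 i hi
        have := congrFun hfeq ⟨i, hi⟩
        rw [hf] at this
        simp only [dif_pos h1, dif_pos h2] at this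
        exact congrArg Subtype.val this
      · have h1 : y1 i = i := by
          by_contra hc; exact hi (hy1 i hc)
        have h2 : y2 i = i := by
          by_contra hc; exact hi (hy2 i hc)
        rw [h1, h2]
    have himg : (f '' {y : Equiv.Perm ℕ | ∀ i, y i ≠ i → i ∈ T}).Finite :=
      Set.toFinite _
    exact Set.Finite.of_finite_image himg hinj
  exact hP.subset hsub
end

section
/- Let L be a first-order language with finitely many function and constant symbols and no relation symbols besides equality, let G be an L-structure with named generators (G is generated by d elements that are named by constant symbols c₁,…,c_d of L), and let G̃ be the reduct of G to the language L̃ obtained from L by omitting the constants c₁,…,c_d. Then for every r ≥ 1 the following are equivalent: (i) G̃ is Π_{r+1}-pseudofinite; (ii) G is Π_{r+1}-pseudofinite; (iii) G is Σ_r-pseudofinite. -/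
open FirstOrder Language

namespace Stmt11

variable {L : FirstOrder.Language}

/-- Prefixing a bounded formula with a block of `m` existential quantifiers. -/
def exsN {α : Type*} : ∀ (m : ℕ) {n : ℕ}, L.BoundedFormula α (n + m) → L.BoundedFormula α n
  | 0, _, φ => φ
  | m + 1, _, φ => exsN m φ.ex

/-- Prefixing a bounded formula with a block of `m` universal quantifiers. -/
def allsN {α : Type*} : ∀ (m : ℕ) {n : ℕ}, L.BoundedFormula α (n + m) → L.BoundedFormula α n
  | 0, _, φ => φ
  | m + 1, _, φ => allsN m φ.all

/-- The `Σ_r`/`Π_r` hierarchy of formulas: `IsSigmaPi L r true φ` means `φ` is `Σ_r`,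
`IsSigmaPi L r false φ` means `φ` is `Π_r`.  At level `0` both classes are the
quantifier-free formulas; a `Σ_{r+1}` formula is a block of existential quantifiers applied
to a `Π_r` formula, and a `Π_{r+1}` formula is a block of universal quantifiers applied to
a `Σ_r` formula. -/
def IsSigmaPi (L : FirstOrder.Language) : ℕ → Bool → ∀ {n : ℕ}, L.BoundedFormula Empty n → Prop
  | 0, _, _, φ => φ.IsQF
  | r + 1, true, n, φ =>
      ∃ (m : ℕ) (ψ : L.BoundedFormula Empty (n + m)), IsSigmaPi L r false ψ ∧ φ = exsN m ψ
  | r + 1, false, n, φ =>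
      ∃ (m : ℕ) (ψ : L.BoundedFormula Empty (n + m)), IsSigmaPi L r true ψ ∧ φ = allsN m ψ

/-- `φ` holds in `M` when `M` carries the `L`-structure `S`. -/
def SentenceHoldsIn (L : FirstOrder.Language) (M : Type*) (S : L.Structure M)
    (φ : L.Sentence) : Prop :=
  letI := S
  M ⊨ φ

/-- `PseudofiniteAt L r b M S` says: every `Σ_r` sentence (if `b = true`), resp. `Π_r`
sentence (if `b = false`), that holds in every finite nonempty `L`-structure holds in `M`. -/
def PseudofiniteAt (L : FirstOrder.Language) (r : ℕ) (b : Bool) (M : Type*)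
    (S : L.Structure M) : Prop :=
  ∀ φ : L.Sentence, IsSigmaPi L r b φ →
    (∀ (E : Type) (SE : L.Structure E), Nonempty E → Finite E → SentenceHoldsIn L E SE φ) →
    SentenceHoldsIn L M S φ

/-- The expansion of an `L`-structure on `M` to `L[[Fin d]]` interpreting the new constants
`c₁, …, c_d` by the given map `c : Fin d → M`. -/
noncomputable def constStruct (L : FirstOrder.Language) {M : Type*} (S : L.Structure M)
    {d : ℕ} (c : Fin d → M) : (L[[Fin d]]).Structure M :=
  letI := S
  letI := constantsOn.structure c
  inferInstance

/-! ### cast lemmas -/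

def castIdx {α : Type*} {n n' : ℕ} (h : n = n') (φ : L.BoundedFormula α n) :
    L.BoundedFormula α n' := h ▸ φ

@[simp] lemma castIdx_rfl {α : Type*} {n : ℕ} (h : n = n) (φ : L.BoundedFormula α n) :
    castIdx h φ = φ := rfl

lemma castIdx_all {n n' : ℕ} (h : n = n') (h2 : n + 1 = n' + 1) (φ : L.BoundedFormula Empty (n + 1)) :
    (castIdx h2 φ).all = castIdx h φ.all := by subst h; rfl

lemma castIdx_ex {n n' : ℕ} (h : n = n') (h2 : n + 1 = n' + 1) (φ : L.BoundedFormula Empty (n + 1)) :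
    (castIdx h2 φ).ex = castIdx h φ.ex := by subst h; rfl

lemma isSigmaPi_castIdx {r : ℕ} {b : Bool} {n n' : ℕ} (h : n = n') {φ : L.BoundedFormula Empty n}
    (hφ : IsSigmaPi L r b φ) : IsSigmaPi L r b (castIdx h φ) := by subst h; exact hφ

lemma realize_castIdx {M : Type*} [L.Structure M] {n n' : ℕ} (h : n = n')
    (φ : L.BoundedFormula Empty n) (v : Empty → M) (xs : Fin n' → M) :
    (castIdx h φ).Realize v xs ↔ φ.Realize v (xs ∘ Fin.cast h) := by
  subst h
  exact Iff.rfl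

/-! ### allsN / exsN lemmas -/

lemma allsN_all : ∀ (m : ℕ) {n : ℕ} (ψ : L.BoundedFormula Empty ((n + 1) + m)),
    (allsN m ψ).all = allsN (m + 1) (castIdx (Nat.succ_add n m) ψ)
  | 0, n, ψ => by simp [allsN]
  | m + 1, n, ψ => by
      rw [show allsN (m+1) ψ = allsN m ψ.all from rfl, allsN_all m ψ.all,
        show (allsN (m+2) (castIdx (Nat.succ_add n (m+1)) ψ)) =
          allsN (m+1) ((castIdx (Nat.succ_add n (m+1)) ψ).all) from rfl,
        castIdx_all (Nat.succ_add n m) (Nat.succ_add n (m+1)) ψ]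

lemma exsN_ex : ∀ (m : ℕ) {n : ℕ} (ψ : L.BoundedFormula Empty ((n + 1) + m)),
    (exsN m ψ).ex = exsN (m + 1) (castIdx (Nat.succ_add n m) ψ)
  | 0, n, ψ => by simp [exsN]
  | m + 1, n, ψ => by
      rw [show exsN (m+1) ψ = exsN m ψ.ex from rfl, exsN_ex m ψ.ex,
        show (exsN (m+2) (castIdx (Nat.succ_add n (m+1)) ψ)) =
          exsN (m+1) ((castIdx (Nat.succ_add n (m+1)) ψ).ex) from rfl,
        castIdx_ex (Nat.succ_add n m) (Nat.succ_add n (m+1)) ψ]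

lemma IsSigmaPi.all' {r n : ℕ} {φ : L.BoundedFormula Empty (n + 1)}
    (h : IsSigmaPi L (r + 1) false φ) : IsSigmaPi L (r + 1) false φ.all := by
  obtain ⟨m, ψ, hψ, rfl⟩ := h
  exact ⟨m + 1, castIdx (Nat.succ_add n m) ψ, isSigmaPi_castIdx _ hψ, (allsN_all m ψ)⟩

lemma IsSigmaPi.ex' {r n : ℕ} {φ : L.BoundedFormula Empty (n + 1)}
    (h : IsSigmaPi L (r + 1) true φ) : IsSigmaPi L (r + 1) true φ.ex := by
  obtain ⟨m, ψ, hψ, rfl⟩ := h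
  exact ⟨m + 1, castIdx (Nat.succ_add n m) ψ, isSigmaPi_castIdx _ hψ, (exsN_ex m ψ)⟩

lemma isSigmaPi_succ_false_of_true {r n : ℕ} {φ : L.BoundedFormula Empty n}
    (h : IsSigmaPi L r true φ) : IsSigmaPi L (r + 1) false φ :=
  ⟨0, φ, h, rfl⟩

lemma realize_allsN {M : Type*} [L.Structure M] :
    ∀ (m : ℕ) {n : ℕ} (φ : L.BoundedFormula Empty (n + m)) (v : Empty → M) (xs : Fin n → M),
      (allsN m φ).Realize v xs ↔ ∀ a : Fin m → M, φ.Realize v (Fin.append xs a)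
  | 0, n, φ, v, xs => by
      simp only [allsN]
      constructor
      · intro h a
        rw [Subsingleton.elim a Fin.elim0, Fin.append_elim0]
        exact h
      · intro h
        have := h Fin.elim0
        rwa [Fin.append_elim0] at this
  | m + 1, n, φ, v, xs => by
      rw [show allsN (m+1) φ = allsN m φ.all from rfl, realize_allsN m]
      constructor
      · intro h a
        have := h (Fin.init a)
        rw [BoundedFormula.realize_all] at this
        have := this (a (Fin.last m))
        rwa [← Fin.append_snoc, Fin.snoc_init_self] at this
      · intro h a
        rw [BoundedFormula.realize_all]
        intro x
        have := h (Fin.snoc a x)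
        rwa [Fin.append_snoc] at this


/-! ### LHom.onBoundedFormula preserves the hierarchy -/

lemma onBF_exsN {L' : FirstOrder.Language} (ϕ : L →ᴸ L') :
    ∀ (m : ℕ) {n : ℕ} (ψ : L.BoundedFormula Empty (n + m)),
      ϕ.onBoundedFormula (exsN m ψ) = exsN m (ϕ.onBoundedFormula ψ)
  | 0, _, _ => rfl
  | m + 1, n, ψ => by
      rw [show exsN (m+1) ψ = exsN m ψ.ex from rfl, onBF_exsN ϕ m,
        show ϕ.onBoundedFormula ψ.ex = (ϕ.onBoundedFormula ψ).ex from rfl]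
      rfl

lemma onBF_allsN {L' : FirstOrder.Language} (ϕ : L →ᴸ L') :
    ∀ (m : ℕ) {n : ℕ} (ψ : L.BoundedFormula Empty (n + m)),
      ϕ.onBoundedFormula (allsN m ψ) = allsN m (ϕ.onBoundedFormula ψ)
  | 0, _, _ => rfl
  | m + 1, n, ψ => by
      rw [show allsN (m+1) ψ = allsN m ψ.all from rfl, onBF_allsN ϕ m,
        show ϕ.onBoundedFormula ψ.all = (ϕ.onBoundedFormula ψ).all from rfl]
      rfl

lemma isQF_onBF {L' : FirstOrder.Language} (ϕ : L →ᴸ L') {n : ℕ}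
    {φ : L.BoundedFormula Empty n} (h : φ.IsQF) : (ϕ.onBoundedFormula φ).IsQF := by
  induction h with
  | falsum => exact BoundedFormula.isQF_bot
  | of_isAtomic h =>
      cases h with
      | equal t₁ t₂ => exact (BoundedFormula.IsAtomic.equal _ _).isQF
      | rel R ts => exact (BoundedFormula.IsAtomic.rel _ _).isQF
  | imp _ _ ih1 ih2 => exact ih1.imp ih2

lemma isSigmaPi_onBF {L' : FirstOrder.Language} (ϕ : L →ᴸ L') :
    ∀ (r : ℕ) (b : Bool) {n : ℕ} (φ : L.BoundedFormula Empty n),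
      IsSigmaPi L r b φ → IsSigmaPi L' r b (ϕ.onBoundedFormula φ)
  | 0, true, n, φ, h => isQF_onBF ϕ h
  | 0, false, n, φ, h => isQF_onBF ϕ h
  | r + 1, true, n, _, ⟨m, ψ, hψ, rfl⟩ =>
      ⟨m, ϕ.onBoundedFormula ψ, isSigmaPi_onBF ϕ r false ψ hψ, onBF_exsN ϕ m ψ⟩
  | r + 1, false, n, _, ⟨m, ψ, hψ, rfl⟩ =>
      ⟨m, ϕ.onBoundedFormula ψ, isSigmaPi_onBF ϕ r true ψ hψ, onBF_allsN ϕ m ψ⟩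


/-! ### translating constants into universally quantified variables -/

variable {d : ℕ}

/-- Translate an `L[[Fin d]]`-term into an `L`-term, turning the constants into the
first `d` bounded variables. -/
def cvTerm (d : ℕ) {n : ℕ} (t : (L[[Fin d]]).Term (Empty ⊕ Fin n)) :
    L.Term (Empty ⊕ Fin (d + n)) :=
  (Term.constantsToVars t).relabel
    (Sum.elim (fun i => Sum.inr (Fin.castAdd n i))
      (Sum.elim (fun e => Sum.inl e) (fun k => Sum.inr (Fin.natAdd d k))))

/-- Translate an `L[[Fin d]]`-formula into an `L`-formula, turning the constants into the
first `d` bounded variables. -/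
def cv (d : ℕ) : ∀ {n : ℕ}, (L[[Fin d]]).BoundedFormula Empty n → L.BoundedFormula Empty (d + n) :=
  fun {_} φ => φ.mapTermRel (g := fun n => d + n) (fun _ t => cvTerm d t)
    (fun _ R => (Equiv.sumEmpty (L.Relations _) _) R) (fun _ => id)

lemma cv_all {n : ℕ} (φ : (L[[Fin d]]).BoundedFormula Empty (n + 1)) :
    cv d φ.all = (cv d φ).all := rfl

lemma cv_ex {n : ℕ} (φ : (L[[Fin d]]).BoundedFormula Empty (n + 1)) :
    cv d φ.ex = (cv d φ).ex := rfl

lemma cv_exsN : ∀ (m : ℕ) {n : ℕ} (ψ : (L[[Fin d]]).BoundedFormula Empty (n + m)),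
    cv d (exsN m ψ) = exsN m (castIdx (Nat.add_assoc d n m).symm (cv d ψ))
  | 0, n, ψ => by rw [castIdx_rfl]; rfl
  | m + 1, n, ψ => by
      rw [show exsN (m+1) ψ = exsN m ψ.ex from rfl, cv_exsN m ψ.ex, cv_ex,
        ← castIdx_ex (Nat.add_assoc d n m).symm (Nat.add_assoc d n (m+1)).symm (cv d ψ)]
      rfl

lemma cv_allsN : ∀ (m : ℕ) {n : ℕ} (ψ : (L[[Fin d]]).BoundedFormula Empty (n + m)),
    cv d (allsN m ψ) = allsN m (castIdx (Nat.add_assoc d n m).symm (cv d ψ))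
  | 0, n, ψ => by rw [castIdx_rfl]; rfl
  | m + 1, n, ψ => by
      rw [show allsN (m+1) ψ = allsN m ψ.all from rfl, cv_allsN m ψ.all, cv_all,
        ← castIdx_all (Nat.add_assoc d n m).symm (Nat.add_assoc d n (m+1)).symm (cv d ψ)]
      rfl

lemma isQF_cv {n : ℕ} {φ : (L[[Fin d]]).BoundedFormula Empty n} (h : φ.IsQF) :
    (cv d φ).IsQF := by
  induction h with
  | falsum => exact BoundedFormula.isQF_bot
  | of_isAtomic h =>
      cases h with
      | equal t₁ t₂ => exact (BoundedFormula.IsAtomic.equal _ _).isQF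
      | rel R ts => exact (BoundedFormula.IsAtomic.rel _ _).isQF
  | imp _ _ ih1 ih2 => exact ih1.imp ih2

lemma isSigmaPi_cv : ∀ (r : ℕ) (b : Bool) {n : ℕ} (φ : (L[[Fin d]]).BoundedFormula Empty n),
    IsSigmaPi (L[[Fin d]]) r b φ → IsSigmaPi L r b (cv d φ)
  | 0, true, n, φ, h => isQF_cv h
  | 0, false, n, φ, h => isQF_cv h
  | r + 1, true, n, _, ⟨m, ψ, hψ, rfl⟩ =>
      ⟨m, castIdx (Nat.add_assoc d n m).symm (cv d ψ),
        isSigmaPi_castIdx _ (isSigmaPi_cv r false ψ hψ), cv_exsN m ψ⟩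
  | r + 1, false, n, _, ⟨m, ψ, hψ, rfl⟩ =>
      ⟨m, castIdx (Nat.add_assoc d n m).symm (cv d ψ),
        isSigmaPi_castIdx _ (isSigmaPi_cv r true ψ hψ), cv_allsN m ψ⟩

lemma realize_cvTerm {M : Type*} [SM : L.Structure M] (w : Fin d → M) {n : ℕ}
    (t : (L[[Fin d]]).Term (Empty ⊕ Fin n)) (v : Empty → M) (xs : Fin n → M) :
    (cvTerm d t).realize (Sum.elim v (Fin.append w xs)) =
      letI := constStruct L SM w
      t.realize (Sum.elim v xs) := by
  letI := constantsOn.structure w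
  rw [cvTerm, Term.realize_relabel]
  have : (Sum.elim v (Fin.append w xs)) ∘
      (Sum.elim (fun i => Sum.inr (Fin.castAdd n i))
        (Sum.elim (fun e => (Sum.inl e : Empty ⊕ Fin (d+n))) (fun k => Sum.inr (Fin.natAdd d k))))
      = Sum.elim (fun i => (↑(L.con i) : M)) (Sum.elim v xs) := by
    funext x
    rcases x with i | (e | k)
    · simp [Fin.append_left]
      rfl
    · rfl
    · simp [Fin.append_right]
  rw [this, Term.realize_constantsToVars]
  rfl

lemma realize_cv (hrel : ∀ k, IsEmpty (L.Relations k)) {M : Type*} [SM : L.Structure M]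
    (w : Fin d → M) {n : ℕ}
    (φ : (L[[Fin d]]).BoundedFormula Empty n) (v : Empty → M) (xs : Fin n → M) :
    (cv d φ).Realize v (Fin.append w xs) ↔
      (letI := constStruct L SM w
       φ.Realize v xs) := by
  letI := constantsOn.structure w
  induction φ with
  | falsum => exact Iff.rfl
  | equal t₁ t₂ =>
      simp only [cv, BoundedFormula.mapTermRel, BoundedFormula.Realize]
      rw [realize_cvTerm w t₁, realize_cvTerm w t₂]
  | rel R ts =>
      rcases R with R | R
      · exact (hrel _).elim R
      · exact isEmptyElim R
  | imp f₁ f₂ ih1 ih2 =>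
      simp only [cv, BoundedFormula.mapTermRel, BoundedFormula.realize_imp] at *
      exact imp_congr (ih1 xs) (ih2 xs)
  | all f ih =>
      simp only [cv, BoundedFormula.mapTermRel, BoundedFormula.realize_all, id] at *
      constructor
      · intro h x
        have := h x
        rw [← Fin.append_snoc] at this
        exact (ih _).mp this
      · intro h x
        rw [← Fin.append_snoc]
        exact (ih _).mpr (h x)


/-! ### substituting closed terms for the first block of bounded variables -/

/-- Substitute the closed terms `σ j` for the first `m` bounded variables of a term. -/
def sbTerm (σ : Fin m → L.Term Empty) {n : ℕ} (t : L.Term (Empty ⊕ Fin (m + n))) :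
    L.Term (Empty ⊕ Fin n) :=
  t.subst (Sum.elim (fun e => Term.var (Sum.inl e))
    (fun i => Fin.addCases (fun j => (σ j).relabel Sum.inl) (fun k => Term.var (Sum.inr k)) i))

/-- Auxiliary recursion for `substFirst`. -/
def sbAux (σ : Fin m → L.Term Empty) :
    ∀ {j : ℕ}, L.BoundedFormula Empty j → ∀ {n : ℕ}, j = m + n → L.BoundedFormula Empty n
  | _, BoundedFormula.falsum, _, _ => BoundedFormula.falsum
  | _, BoundedFormula.equal t₁ t₂, _, h =>
      BoundedFormula.equal (sbTerm σ (h ▸ t₁)) (sbTerm σ (h ▸ t₂))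
  | _, BoundedFormula.rel R ts, _, h => BoundedFormula.rel R (fun i => sbTerm σ (h ▸ ts i))
  | _, BoundedFormula.imp f₁ f₂, _, h => (sbAux σ f₁ h).imp (sbAux σ f₂ h)
  | _, BoundedFormula.all f, n, h => (sbAux σ f (n := n + 1) (by subst h; rfl)).all

/-- Substitute the closed terms `σ j` for the first `m` bounded variables of a formula. -/
def substFirst (σ : Fin m → L.Term Empty) {n : ℕ} (φ : L.BoundedFormula Empty (m + n)) :
    L.BoundedFormula Empty n :=
  sbAux σ φ rfl

variable {σ : Fin m → L.Term Empty}

lemma substFirst_all {n : ℕ} (φ : L.BoundedFormula Empty (m + n + 1)) :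
    substFirst σ (φ.all) = (substFirst σ (n := n + 1) φ).all := rfl

lemma substFirst_ex {n : ℕ} (φ : L.BoundedFormula Empty (m + n + 1)) :
    substFirst σ (φ.ex) = (substFirst σ (n := n + 1) φ).ex := rfl

lemma substFirst_exsN : ∀ (k : ℕ) {n : ℕ} (ψ : L.BoundedFormula Empty ((m + n) + k)),
    substFirst σ (exsN k ψ) = exsN k (substFirst σ (castIdx (Nat.add_assoc m n k) ψ))
  | 0, n, ψ => by rw [castIdx_rfl]; rfl
  | k + 1, n, ψ => by
      rw [show exsN (k+1) ψ = exsN k ψ.ex from rfl, substFirst_exsN k ψ.ex,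
        ← castIdx_ex (Nat.add_assoc m n k) (Nat.add_assoc m n (k+1)) ψ, substFirst_ex]
      rfl

lemma substFirst_allsN : ∀ (k : ℕ) {n : ℕ} (ψ : L.BoundedFormula Empty ((m + n) + k)),
    substFirst σ (allsN k ψ) = allsN k (substFirst σ (castIdx (Nat.add_assoc m n k) ψ))
  | 0, n, ψ => by rw [castIdx_rfl]; rfl
  | k + 1, n, ψ => by
      rw [show allsN (k+1) ψ = allsN k ψ.all from rfl, substFirst_allsN k ψ.all,
        ← castIdx_all (Nat.add_assoc m n k) (Nat.add_assoc m n (k+1)) ψ, substFirst_all]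
      rfl

lemma isQF_substFirst {n : ℕ} {φ : L.BoundedFormula Empty (m + n)} (h : φ.IsQF) :
    (substFirst σ φ).IsQF := by
  induction h with
  | falsum => exact BoundedFormula.isQF_bot
  | of_isAtomic h =>
      cases h with
      | equal t₁ t₂ => exact (BoundedFormula.IsAtomic.equal _ _).isQF
      | rel R ts => exact (BoundedFormula.IsAtomic.rel _ _).isQF
  | imp _ _ ih1 ih2 => exact ih1.imp ih2

lemma isSigmaPi_substFirst : ∀ (r : ℕ) (b : Bool) {n : ℕ} (φ : L.BoundedFormula Empty (m + n)),
    IsSigmaPi L r b φ → IsSigmaPi L r b (substFirst σ φ)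
  | 0, true, n, φ, h => isQF_substFirst h
  | 0, false, n, φ, h => isQF_substFirst h
  | r + 1, true, n, _, ⟨k, ψ, hψ, rfl⟩ =>
      ⟨k, substFirst σ (castIdx (Nat.add_assoc m n k) ψ),
        isSigmaPi_substFirst r false _ (isSigmaPi_castIdx _ hψ), substFirst_exsN k ψ⟩
  | r + 1, false, n, _, ⟨k, ψ, hψ, rfl⟩ =>
      ⟨k, substFirst σ (castIdx (Nat.add_assoc m n k) ψ),
        isSigmaPi_substFirst r true _ (isSigmaPi_castIdx _ hψ), substFirst_allsN k ψ⟩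

lemma realize_sbTerm {M : Type*} [L.Structure M] {n : ℕ} (t : L.Term (Empty ⊕ Fin (m + n)))
    (v : Empty → M) (xs : Fin n → M) :
    (sbTerm σ t).realize (Sum.elim v xs) =
      t.realize (Sum.elim v (Fin.append (fun j => (σ j).realize v) xs)) := by
  rw [sbTerm, Term.realize_subst]
  congr 1
  funext x
  rcases x with e | i
  · rfl
  · simp only [Sum.elim_inr]
    refine Fin.addCases (fun j => ?_) (fun k => ?_) i
    · rw [Fin.addCases_left, Term.realize_relabel, Fin.append_left]
      exact congrArg (fun f => Term.realize f (σ j)) (funext fun e => e.elim)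
    · rw [Fin.addCases_right, Fin.append_right]
      rfl

lemma realize_sbAux {M : Type*} [L.Structure M] (v : Empty → M) :
    ∀ {j : ℕ} (φ : L.BoundedFormula Empty j) {n : ℕ} (h : j = m + n) (xs : Fin n → M),
    (sbAux σ φ h).Realize v xs ↔
      φ.Realize v ((Fin.append (fun j => (σ j).realize v) xs) ∘ Fin.cast h) := by
  intro j φ
  induction φ with
  | falsum => exact fun _ _ => Iff.rfl
  | equal t₁ t₂ =>
      intro n h xs
      subst h
      simp only [sbAux, BoundedFormula.Realize]
      rw [realize_sbTerm, realize_sbTerm]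
      exact Iff.rfl
  | rel R ts =>
      intro n h xs
      subst h
      simp only [sbAux, BoundedFormula.Realize]
      simp only [realize_sbTerm]
      exact Iff.rfl
  | imp f₁ f₂ ih1 ih2 =>
      intro n h xs
      subst h
      exact imp_congr (ih1 rfl xs) (ih2 rfl xs)
  | all f ih =>
      intro n h xs
      subst h
      simp only [sbAux, BoundedFormula.realize_all]
      constructor
      · intro hx x
        have := (ih (n := n + 1) rfl (Fin.snoc xs x)).mp (hx x)
        rw [show ((Fin.append (fun j => (σ j).realize v) (Fin.snoc xs x)) ∘
            Fin.cast (rfl : (m + (n+1) : ℕ) = m + (n+1)))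
            = Fin.append (fun j => (σ j).realize v) (Fin.snoc xs x) from rfl,
          Fin.append_snoc] at this
        exact this
      · intro hx x
        refine (ih (n := n + 1) rfl (Fin.snoc xs x)).mpr ?_
        rw [show ((Fin.append (fun j => (σ j).realize v) (Fin.snoc xs x)) ∘
            Fin.cast (rfl : (m + (n+1) : ℕ) = m + (n+1)))
            = Fin.append (fun j => (σ j).realize v) (Fin.snoc xs x) from rfl,
          Fin.append_snoc]
        exact hx x

lemma realize_substFirst {M : Type*} [L.Structure M] {n : ℕ} (φ : L.BoundedFormula Empty (m + n))
    (v : Empty → M) (xs : Fin n → M) :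
    (substFirst σ φ).Realize v xs ↔
      φ.Realize v (Fin.append (fun j => (σ j).realize v) xs) :=
  realize_sbAux v φ rfl xs


lemma isSigmaPi_alls {r : ℕ} : ∀ {n : ℕ} (φ : L.BoundedFormula Empty n),
    IsSigmaPi L (r + 1) false φ → IsSigmaPi L (r + 1) false (φ.alls : L.Sentence)
  | 0, φ, h => h
  | n + 1, φ, h => isSigmaPi_alls (φ.all) h.all'

lemma append_swap0 {M : Type*} {m : ℕ} (u : Fin 0 → M) (w : Fin m → M) :
    (Fin.append w u) ∘ Fin.cast (Nat.zero_add m : (0 + m : ℕ) = m + 0) = Fin.append u w := by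
  funext i
  simp only [Function.comp_apply]
  rw [Fin.append_right_nil w u rfl, Fin.append_left_nil u w rfl]
  rfl

lemma exists_closedTerm {G : Type} [SG : L.Structure G] {d : ℕ} (c : Fin d → G)
    (hgen : Substructure.closure L (Set.range c) = ⊤) (a : G) :
    ∃ t : (L[[Fin d]]).Term Empty,
      (letI := constStruct L SG c
       t.realize (default : Empty → G)) = a := by
  have ha : a ∈ Substructure.closure L (Set.range c) := by rw [hgen]; trivial
  obtain ⟨t₀, ht₀⟩ := Substructure.mem_closure_iff_exists_term.mp ha
  letI := constantsOn.structure c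
  refine ⟨((lhomWithConstants L (Fin d)).onTerm t₀).subst
    (fun x => Constants.term (L.con (x.2.choose))), ?_⟩
  haveI : @LHom.IsExpansionOn L (L[[Fin d]]) (L.lhomWithConstants (Fin d)) G SG
      (constStruct L SG c) := by unfold constStruct; infer_instance
  rw [Term.realize_subst, LHom.realize_onTerm]
  rw [← ht₀]
  congr 1
  funext x
  rw [Term.realize_constants]
  show c (x.2.choose) = (x : G)
  exact x.2.choose_spec


lemma eq_append0 {M : Type*} {p : ℕ} (xs : Fin (p + 0) → M) :
    xs = Fin.append (fun j => xs (Fin.castAdd 0 j)) (default : Fin 0 → M) := by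
  funext i
  refine Fin.addCases (fun j => ?_) (fun k => k.elim0) i
  rw [Fin.append_left]

/-- Let `L` be a language with finitely many function and constant symbols and no relation
symbols, and let `G` be an `L[[Fin d]]`-structure with named generators: the constants
`c : Fin d → G` generate `G` as an `L`-structure.  Let `G̃` be the reduct of `G` to `L`.
Then for every `r ≥ 1` the following are equivalent: (i) `G̃` is `Π_{r+1}`-pseudofinite;
(ii) `G` is `Π_{r+1}`-pseudofinite; (iii) `G` is `Σ_r`-pseudofinite. -/
theorem stmt_11 (L : FirstOrder.Language) (hrel : ∀ n, IsEmpty (L.Relations n))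
    (hfun : Finite (Σ n, L.Functions n))
    (G : Type) [SG : L.Structure G] (d : ℕ) (c : Fin d → G)
    (hgen : Substructure.closure L (Set.range c) = ⊤)
    (r : ℕ) (hr : 1 ≤ r) :
    List.TFAE
      [PseudofiniteAt L (r + 1) false G SG,
       PseudofiniteAt (L[[Fin d]]) (r + 1) false G (constStruct L SG c),
       PseudofiniteAt (L[[Fin d]]) r true G (constStruct L SG c)] := by
  tfae_have 1 → 2 := by
    intro hA φ hφ hfin
    have hθ : IsSigmaPi L (r + 1) false ((cv d φ).alls) :=
      isSigmaPi_alls _ (isSigmaPi_cv (r + 1) false φ hφ)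
    have hfinθ : ∀ (E : Type) (SE : L.Structure E), Nonempty E → Finite E →
        SentenceHoldsIn L E SE ((cv d φ).alls) := by
      intro E SE hne hfinE
      letI := SE
      have key : ∀ xs : Fin (d + 0) → E, (cv d φ).Realize (default : Empty → E) xs := by
        intro xs
        rw [eq_append0 xs]
        exact (realize_cv hrel (fun j => xs (Fin.castAdd 0 j)) φ default default).mpr
          (hfin E (constStruct L SE (fun j => xs (Fin.castAdd 0 j))) hne hfinE)
      exact BoundedFormula.realize_alls.mpr key
    have hG := hA ((cv d φ).alls) hθ hfinθ
    have hG' : ∀ xs : Fin (d + 0) → G, (cv d φ).Realize (default : Empty → G) xs :=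
      BoundedFormula.realize_alls.mp hG
    exact (realize_cv hrel c φ default default).mp (hG' (Fin.append c (default : Fin 0 → G)))
  tfae_have 2 → 1 := by
    intro hB φ hφ hfin
    have hΦ : IsSigmaPi (L[[Fin d]]) (r + 1) false
        ((lhomWithConstants L (Fin d)).onSentence φ) :=
      isSigmaPi_onBF _ _ _ _ hφ
    have hfinΦ : ∀ (E : Type) (SE : (L[[Fin d]]).Structure E), Nonempty E → Finite E →
        SentenceHoldsIn _ E SE ((lhomWithConstants L (Fin d)).onSentence φ) := by
      intro E SE hne hfinE
      letI := SE
      letI : L.Structure E := (lhomWithConstants L (Fin d)).reduct E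
      haveI := LHom.isExpansionOn_reduct (L.lhomWithConstants (Fin d)) E
      have h1 : E ⊨ φ := hfin E _ hne hfinE
      exact (LHom.realize_onSentence (M := E) (lhomWithConstants L (Fin d)) φ).mpr h1
    have hG := hB _ hΦ hfinΦ
    letI := constantsOn.structure c
    exact (LHom.realize_onSentence (M := G) (lhomWithConstants L (Fin d)) φ).mp hG
  tfae_have 2 → 3 := by
    intro hB φ hφ hfin
    exact hB φ (isSigmaPi_succ_false_of_true hφ) hfin
  tfae_have 3 → 2 := by
    intro hC φ hφ hfin
    obtain ⟨m, ψ, hψ, rfl⟩ := hφ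
    letI := constStruct L SG c
    refine (realize_allsN m ψ (default : Empty → G) (default : Fin 0 → G)).mpr ?_
    intro a
    choose t ht using fun j => exists_closedTerm c hgen (a j)
    have hχ : IsSigmaPi (L[[Fin d]]) r true (substFirst (n := 0) t (castIdx (Nat.zero_add m) ψ)) :=
      isSigmaPi_substFirst r true _ (isSigmaPi_castIdx _ hψ)
    have hfinχ : ∀ (E : Type) (SE : (L[[Fin d]]).Structure E), Nonempty E → Finite E →
        SentenceHoldsIn _ E SE (substFirst (n := 0) t (castIdx (Nat.zero_add m) ψ)) := by
      intro E SE hne hfinE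
      have h1 := hfin E SE hne hfinE
      letI := SE
      have h2 : ∀ b : Fin m → E, ψ.Realize (default : Empty → E) (Fin.append default b) :=
        (realize_allsN m ψ default default).mp h1
      refine (realize_substFirst _ default default).mpr ?_
      refine (realize_castIdx _ _ default _).mpr ?_
      rw [append_swap0]
      exact h2 _
    have hGχ := hC _ hχ hfinχ
    have h3 := (realize_substFirst (σ := t) (n := 0) (castIdx (Nat.zero_add m) ψ) default default).mp hGχ
    have h4 := (realize_castIdx (Nat.zero_add m) ψ default _).mp h3
    rw [append_swap0] at h4
    rwa [show (fun j => (t j).realize (default : Empty → G)) = a from funext ht] at h4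
  tfae_finish


end Stmt11
end

section
/- Let L be a first-order language with finitely many function and constant symbols and no relation symbols besides equality, and let G be an L-structure with named generators (G is generated by d elements named by constant symbols c₁,…,c_d of L) that is Σ₁-pseudofinite. Then there exist finite L-structures (E_n)_{n∈ℕ}, a nonprincipal ultrafilter 𝒰 on ℕ, and an injective homomorphism (L-embedding) β from G into the ultraproduct E = ∏_n E_n/𝒰 such that β preserves satisfaction of Σ₁-formulas in both directions: for all p₁,…,p_k ∈ G and each quantifier-free L-formula θ(x₁,…,x_k, ȳ), G ⊨ ∃ȳ θ(p₁,…,p_k, ȳ) if and only if E ⊨ ∃ȳ θ(β(p₁),…,β(p_k), ȳ). -/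
open FirstOrder Language

namespace Stmt13

/-- `φ` holds in `M` when `M` carries the `L`-structure `S`. -/
def SentenceHoldsIn (L : FirstOrder.Language) (M : Type*) (S : L.Structure M)
    (φ : L.Sentence) : Prop :=
  letI := S
  M ⊨ φ

/-- `φ` is realized by the valuation `v` in `M` carrying the `L`-structure `S`. -/
def RealizeWith (L : FirstOrder.Language) {M : Type*} (S : L.Structure M) {α : Type*}
    (φ : L.Formula α) (v : α → M) : Prop :=
  letI := S
  φ.Realize v

/-- `G` is `Σ₁`-pseudofinite: every existential closure of a quantifier-free formula that
holds in every finite nonempty `L`-structure holds in `G`. -/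
def SigmaOnePseudofinite (L : FirstOrder.Language) (M : Type*) (S : L.Structure M) : Prop :=
  ∀ (m : ℕ) (θ : L.BoundedFormula Empty m), θ.IsQF →
    (∀ (E : Type) (SE : L.Structure E), Nonempty E → Finite E →
      SentenceHoldsIn L E SE θ.exs) →
    SentenceHoldsIn L M S θ.exs

/-- The `L`-structure on the ultraproduct `∏ E n / 𝒰`. -/
noncomputable def ultraStruct (L : FirstOrder.Language) (E : ℕ → Type) (SE : ∀ n, L.Structure (E n))
    (𝒰 : Ultrafilter ℕ) : L.Structure ((𝒰 : Filter ℕ).Product E) :=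
  letI := SE
  inferInstance

section Aux

open FirstOrder.Language.BoundedFormula

variable {L : FirstOrder.Language} {α β : Type*} {M : Type*} [L.Structure M]

theorem isQF_subst {n : ℕ} {φ : L.BoundedFormula α n} (hφ : φ.IsQF) (f : α → L.Term β) :
    (φ.subst f).IsQF := by
  induction hφ with
  | falsum => exact isQF_bot
  | of_isAtomic ha =>
    cases ha with
    | equal t₁ t₂ => exact (IsAtomic.equal _ _).isQF
    | rel R ts => exact (IsAtomic.rel _ _).isQF
  | imp h1 h2 ih1 ih2 => exact ih1.imp ih2

theorem isQF_toFormula {n : ℕ} {φ : L.BoundedFormula α n} (hφ : φ.IsQF) :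
    φ.toFormula.IsQF := by
  induction hφ with
  | falsum => exact isQF_bot
  | of_isAtomic ha =>
    cases ha with
    | equal t₁ t₂ => exact (IsAtomic.equal _ _).isQF
    | rel R ts => exact (IsAtomic.rel _ _).isQF
  | imp h1 h2 ih1 ih2 => exact ih1.imp ih2

theorem realize_castLE_qf (hrel : ∀ n, IsEmpty (L.Relations n)) {m n : ℕ} (h : m ≤ n)
    {φ : L.BoundedFormula α m} (hφ : φ.IsQF) (v : α → M) (xs : Fin n → M) :
    (φ.castLE h).Realize v xs ↔ φ.Realize v (xs ∘ Fin.castLE h) := by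
  induction hφ with
  | falsum => rfl
  | of_isAtomic ha =>
    cases ha with
    | equal t₁ t₂ =>
      have hc : Sum.elim v xs ∘ Sum.map id (Fin.castLE h) = Sum.elim v (xs ∘ Fin.castLE h) := by
        funext a; cases a <;> rfl
      simp only [Term.bdEqual, BoundedFormula.castLE, BoundedFormula.Realize, Term.realize_relabel, hc]
    | rel R ts => exact ((hrel _).false R).elim
  | imp h1 h2 ih1 ih2 =>
    simp only [BoundedFormula.castLE, realize_imp, ih1, ih2]

theorem countable_sigma_bf (hrel : ∀ n, IsEmpty (L.Relations n))
    (hfun : Finite (Σ n, L.Functions n)) :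
    Countable (Σ n, L.BoundedFormula Empty n) := by
  haveI : Countable (Σ l, L.Functions l) := Finite.to_countable
  haveI : IsEmpty (Σ n, L.Relations n) := ⟨fun x => (hrel x.1).false x.2⟩
  exact BoundedFormula.listEncode_sigma_injective.countable

theorem inf_castLE_realize_iff (hrel : ∀ n, IsEmpty (L.Relations n))
    {m₁ m₂ : ℕ} {θ₁ : L.BoundedFormula Empty m₁} {θ₂ : L.BoundedFormula Empty m₂}
    (h₁ : θ₁.IsQF) (h₂ : θ₂.IsQF) [Nonempty M] :
    (∀ xs : Fin (max m₁ m₂) → M,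
        ((θ₁.castLE (le_max_left _ _)) ⊓ (θ₂.castLE (le_max_right _ _))).Realize
          (default : Empty → M) xs) ↔
      ((∀ xs : Fin m₁ → M, θ₁.Realize default xs) ∧
        ∀ xs : Fin m₂ → M, θ₂.Realize default xs) := by
  constructor
  · intro h
    obtain ⟨y₀⟩ := ‹Nonempty M›
    constructor
    · intro ys
      have hx := (BoundedFormula.realize_inf.mp
        (h fun j => if hj : (j : ℕ) < m₁ then ys ⟨j, hj⟩ else y₀)).1
      rw [realize_castLE_qf hrel _ h₁] at hx
      have hys : ((fun j : Fin (max m₁ m₂) =>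
          if hj : (j : ℕ) < m₁ then ys ⟨j, hj⟩ else y₀) ∘ Fin.castLE (le_max_left _ _)) = ys := by
        funext j
        simp [j.isLt]
      rwa [hys] at hx
    · intro ys
      have hx := (BoundedFormula.realize_inf.mp
        (h fun j => if hj : (j : ℕ) < m₂ then ys ⟨j, hj⟩ else y₀)).2
      rw [realize_castLE_qf hrel _ h₂] at hx
      have hys : ((fun j : Fin (max m₁ m₂) =>
          if hj : (j : ℕ) < m₂ then ys ⟨j, hj⟩ else y₀) ∘ Fin.castLE (le_max_right _ _)) = ys := by
        funext j
        simp [j.isLt]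
      rwa [hys] at hx
  · rintro ⟨ha, hb⟩ xs
    rw [BoundedFormula.realize_inf, realize_castLE_qf hrel _ h₁, realize_castLE_qf hrel _ h₂]
    exact ⟨ha _, hb _⟩

theorem realize_fullSubst {k m : ℕ} (θ : L.BoundedFormula (Fin k) m)
    (u : Fin k → L.Term Empty) (w : Fin m → L.Term Empty) :
    Formula.Realize (M := M)
        ((θ.subst u).toFormula.subst (Sum.elim (fun e : Empty => Empty.elim e) w)) default ↔
      θ.Realize (fun i => (u i).realize (default : Empty → M))
        (fun j => (w j).realize (default : Empty → M)) := by
  rw [Formula.Realize, BoundedFormula.realize_subst]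
  rw [show (BoundedFormula.Realize ((θ.subst u).toFormula)
      (fun a => (Sum.elim (fun e : Empty => Empty.elim e) w a).realize (default : Empty → M))
      default) = Formula.Realize ((θ.subst u).toFormula)
      (fun a => (Sum.elim (fun e : Empty => Empty.elim e) w a).realize (default : Empty → M))
    from rfl]
  rw [BoundedFormula.realize_toFormula, BoundedFormula.realize_subst]
  have h1 : (fun i => (u i).realize
      ((fun a => (Sum.elim (fun e : Empty => Empty.elim e) w a).realize (default : Empty → M))
        ∘ Sum.inl)) = fun i => (u i).realize (default : Empty → M) := by
    funext i
    congr 1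
    exact Subsingleton.elim _ _
  rw [h1]
  rfl

end Aux

/-- Let `L` be a language with finitely many function and constant symbols and no relation
symbols, and let `G` be a `Σ₁`-pseudofinite `L`-structure with named generators: constant
symbols `cs 1, …, cs d` of `L` whose interpretations generate `G`.  Then there are finite
`L`-structures `E n`, a nonprincipal ultrafilter `𝒰` on `ℕ`, and an `L`-embedding `β` of
`G` into the ultraproduct `E = ∏ E n / 𝒰` preserving satisfaction of `Σ₁`-formulas in
both directions. -/
theorem stmt_13 (L : FirstOrder.Language) (hrel : ∀ n, IsEmpty (L.Relations n))
    (hfun : Finite (Σ n, L.Functions n))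
    (G : Type) [SG : L.Structure G] (d : ℕ) (cs : Fin d → L.Constants)
    (hgen : Substructure.closure L (Set.range fun i => ((cs i : G) : G)) = ⊤)
    (hpsf : SigmaOnePseudofinite L G SG) :
    ∃ (E : ℕ → Type) (SE : ∀ n, L.Structure (E n)) (𝒰 : Ultrafilter ℕ),
      (∀ n, Finite (E n)) ∧ (∀ n, Nonempty (E n)) ∧
      (∀ S : Set ℕ, S.Finite → S ∉ 𝒰) ∧
      ∃ β : @FirstOrder.Language.Embedding L G ((𝒰 : Filter ℕ).Product E) SG
          (ultraStruct L E SE 𝒰),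
        ∀ (k m : ℕ) (θ : L.BoundedFormula (Fin k) m), θ.IsQF →
          ∀ p : Fin k → G,
            (θ.exs.Realize p ↔
              RealizeWith L (ultraStruct L E SE 𝒰) θ.exs fun i => β.toEmbedding (p i)) := by
  classical
  -- G is nonempty
  have hGne : Nonempty G := by
    have h1 : SentenceHoldsIn L G SG (⊤ : L.BoundedFormula Empty 1).exs := by
      apply hpsf 1 ⊤ BoundedFormula.IsQF.top
      intro E SE hne hfin
      show Formula.Realize (M := E) (⊤ : L.BoundedFormula Empty 1).exs default
      rw [BoundedFormula.realize_exs]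
      exact ⟨fun _ => Classical.arbitrary E, by simp⟩
    have h2 : Formula.Realize (M := G) (⊤ : L.BoundedFormula Empty 1).exs default := h1
    rw [BoundedFormula.realize_exs] at h2
    obtain ⟨xs, -⟩ := h2
    exact ⟨xs 0⟩
  -- enumerate the Π₁ facts of G
  haveI hT : Countable (Σ n, L.BoundedFormula Empty n) := countable_sigma_bf hrel hfun
  let P := {x : Σ n, L.BoundedFormula Empty n //
    x.2.IsQF ∧ ∀ xs : Fin x.1 → G, x.2.Realize (default : Empty → G) xs}
  haveI : Countable P := inferInstance
  haveI hPne : Nonempty P :=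
    ⟨⟨⟨0, ⊤⟩, BoundedFormula.IsQF.top, fun _ => by simp⟩⟩
  obtain ⟨e, he⟩ := exists_surjective_nat P
  -- combined universal formulas
  have comb : ∀ n : ℕ, ∃ (m : ℕ) (θ : L.BoundedFormula Empty m), θ.IsQF ∧
      (∀ xs : Fin m → G, θ.Realize (default : Empty → G) xs) ∧
      ∀ (M : Type) (SM : L.Structure M), Nonempty M →
        (∀ xs : Fin m → M, θ.Realize (default : Empty → M) xs) →
        ∀ i ≤ n, ∀ xs : Fin (e i).1.1 → M, (e i).1.2.Realize (default : Empty → M) xs := by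
    intro n
    induction n with
    | zero =>
      refine ⟨(e 0).1.1, (e 0).1.2, (e 0).2.1, (e 0).2.2, ?_⟩
      intro M SM hne h i hi
      obtain rfl : i = 0 := Nat.le_zero.mp hi
      exact h
    | succ n ih =>
      obtain ⟨m, θ, hqf, hGsat, hall⟩ := ih
      refine ⟨max m (e (n+1)).1.1,
        (θ.castLE (le_max_left _ _)) ⊓ ((e (n+1)).1.2.castLE (le_max_right _ _)),
        hqf.castLE.inf (e (n+1)).2.1.castLE, ?_, ?_⟩
      · exact (inf_castLE_realize_iff hrel hqf (e (n+1)).2.1).mpr ⟨hGsat, (e (n+1)).2.2⟩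
      · intro M SM hne h i hi
        haveI := hne
        have h2 := (inf_castLE_realize_iff (M := M) hrel hqf (e (n+1)).2.1).mp h
        by_cases h' : i ≤ n
        · exact hall M SM hne h2.1 i h'
        · obtain rfl : i = n + 1 := by omega
          exact h2.2
  -- finite models
  have hEex : ∀ n : ℕ, ∃ (E : Type) (SE : L.Structure E), Nonempty E ∧ Finite E ∧
      ∀ i ≤ n, ∀ xs : Fin (e i).1.1 → E, (e i).1.2.Realize (default : Empty → E) xs := by
    intro n
    obtain ⟨m, θ, hqf, hGsat, hall⟩ := comb n
    have hEex0 : ∃ (E : Type) (SE : L.Structure E), Nonempty E ∧ Finite E ∧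
        ∀ xs : Fin m → E, θ.Realize (default : Empty → E) xs := by
      by_contra hcon
      push_neg at hcon
      have hx : SentenceHoldsIn L G SG θ.not.exs := by
        apply hpsf m θ.not hqf.not
        intro E SE hne hfin
        obtain ⟨xs, hxs⟩ := hcon E SE hne hfin
        show Formula.Realize (M := E) (θ.not).exs default
        rw [BoundedFormula.realize_exs]
        exact ⟨xs, BoundedFormula.realize_not.mpr hxs⟩
      have h2 : Formula.Realize (M := G) (θ.not).exs default := hx
      rw [BoundedFormula.realize_exs] at h2
      obtain ⟨xs, hxs⟩ := h2
      exact (BoundedFormula.realize_not.mp hxs) (hGsat xs)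
    obtain ⟨E, SE, hne, hfin, hsat⟩ := hEex0
    exact ⟨E, SE, hne, hfin, hall E SE hne hsat⟩
  choose E SE hEne hEfin hEsat using hEex
  refine ⟨E, SE, Filter.hyperfilter ℕ, hEfin, hEne, fun S hS => hS.notMem_hyperfilter, ?_⟩
  letI SP : L.Structure ((Filter.hyperfilter ℕ : Filter ℕ).Product E) :=
    ultraStruct L E SE (Filter.hyperfilter ℕ)
  show ∃ β : @FirstOrder.Language.Embedding L G
      ((Filter.hyperfilter ℕ : Filter ℕ).Product E) SG SP,
    ∀ (k m : ℕ) (θ : L.BoundedFormula (Fin k) m), θ.IsQF →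
      ∀ p : Fin k → G,
        (θ.exs.Realize p ↔ RealizeWith L SP θ.exs fun i => β.toEmbedding (p i))
  -- Łoś
  have los : ∀ φ : L.Sentence,
      Formula.Realize (M := (Filter.hyperfilter ℕ : Filter ℕ).Product E) φ default ↔
        ∀ᶠ n in (Filter.hyperfilter ℕ : Filter ℕ), Formula.Realize (M := E n) φ default := by
    intro φ
    letI := SE
    exact Ultraproduct.sentence_realize (M := E) (u := Filter.hyperfilter ℕ) φ
  -- transfer of Π₁ facts
  have key : ∀ (m : ℕ) (θ : L.BoundedFormula Empty m), θ.IsQF →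
      (∀ xs : Fin m → G, θ.Realize (default : Empty → G) xs) →
      ∀ xs : Fin m → (Filter.hyperfilter ℕ : Filter ℕ).Product E,
        θ.Realize (default : Empty → (Filter.hyperfilter ℕ : Filter ℕ).Product E) xs := by
    intro m θ hqf hsatG
    obtain ⟨i, hi⟩ := he ⟨⟨m, θ⟩, hqf, hsatG⟩
    have hev : ∀ᶠ n in (Filter.hyperfilter ℕ : Filter ℕ),
        Formula.Realize (M := E n) θ.alls default := by
      have hmem : {n : ℕ | i ≤ n} ∈ (Filter.hyperfilter ℕ : Filter ℕ) :=
        Filter.hyperfilter_le_cofinite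
          (by rw [Nat.cofinite_eq_atTop]; exact Filter.mem_atTop i)
      refine Filter.mem_of_superset hmem ?_
      intro n hn
      have h2 := hEsat n i hn
      rw [hi] at h2
      show Formula.Realize (M := E n) θ.alls default
      rw [BoundedFormula.realize_alls]
      exact h2
    have h3 := (los θ.alls).mpr hev
    rw [BoundedFormula.realize_alls] at h3
    exact h3
  -- transfer of quantifier-free sentences, both directions
  have keyF : ∀ θ : L.Formula Empty, θ.IsQF →
      (Formula.Realize (M := G) θ default ↔
        Formula.Realize (M := (Filter.hyperfilter ℕ : Filter ℕ).Product E) θ default) := by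
    intro θ hqf
    constructor
    · intro h
      exact key 0 θ hqf (fun xs => by rw [Subsingleton.elim xs (default : Fin 0 → G)]; exact h)
        default
    · intro h
      by_contra hc
      have h2 := key 0 θ.not hqf.not
        (fun xs => by
          rw [Subsingleton.elim xs (default : Fin 0 → G)]
          exact BoundedFormula.realize_not.mpr hc)
        default
      exact (BoundedFormula.realize_not.mp h2) h
  -- closed terms name all elements of G
  have hterm : ∀ g : G, ∃ t : L.Term Empty, t.realize (default : Empty → G) = g := by
    intro g
    have hg : g ∈ Substructure.closure L (Set.range fun i => ((cs i : G) : G)) := by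
      rw [hgen]; exact Substructure.mem_top g
    obtain ⟨t, ht⟩ := Substructure.mem_closure_iff_exists_term.mp hg
    refine ⟨t.subst fun x => Constants.term (cs (Classical.choose x.2)), ?_⟩
    rw [Term.realize_subst, ← ht]
    congr 1
    funext x
    rw [Term.realize_constants]
    exact Classical.choose_spec x.2
  choose τ hτ using hterm
  -- transfer of closed-term equalities
  have hteq : ∀ t s : L.Term Empty,
      (t.realize (default : Empty → G) = s.realize (default : Empty → G) ↔
        Term.realize (M := (Filter.hyperfilter ℕ : Filter ℕ).Product E) default t =
          Term.realize (M := (Filter.hyperfilter ℕ : Filter ℕ).Product E) default s) := by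
    intro t s
    have h1 := keyF (Term.equal t s) ((BoundedFormula.IsAtomic.equal _ _).isQF)
    rw [Formula.realize_equal, Formula.realize_equal] at h1
    exact h1
  -- the embedding
  refine ⟨{ toFun := fun g =>
              Term.realize (M := (Filter.hyperfilter ℕ : Filter ℕ).Product E) default (τ g),
            inj' := ?_,
            map_fun' := ?_,
            map_rel' := fun {n} r _ => ((hrel n).false r).elim }, ?_⟩
  · intro g g' h
    have h2 := (hteq (τ g) (τ g')).mpr h
    rwa [hτ g, hτ g'] at h2
  · intro n f x
    have h1 : (τ (Structure.funMap f x)).realize (default : Empty → G) =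
        (Term.func f fun i => τ (x i)).realize (default : Empty → G) := by
      rw [hτ, Term.realize_func]
      congr 1
      funext i
      rw [hτ]
    have h2 := (hteq _ _).mp h1
    rw [Term.realize_func] at h2
    exact h2
  -- the Σ₁ equivalence
  intro k m θ hθ p
  constructor
  · intro h
    rw [BoundedFormula.realize_exs] at h
    obtain ⟨xs, hxs⟩ := h
    set σ : L.Formula Empty :=
      (θ.subst fun i => τ (p i)).toFormula.subst
        (Sum.elim (fun e : Empty => Empty.elim e) fun j => τ (xs j)) with hσ
    have hσqf : σ.IsQF := isQF_subst (isQF_toFormula (isQF_subst hθ _)) _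
    have hσG : Formula.Realize (M := G) σ default := by
      rw [hσ, realize_fullSubst]
      have hp : (fun i => (τ (p i)).realize (default : Empty → G)) = p := by
        funext i; exact hτ (p i)
      have hw : (fun j => (τ (xs j)).realize (default : Empty → G)) = xs := by
        funext j; exact hτ (xs j)
      rw [hp, hw]
      exact hxs
    have hσΩ := (keyF σ hσqf).mp hσG
    rw [hσ, realize_fullSubst] at hσΩ
    show Formula.Realize (M := (Filter.hyperfilter ℕ : Filter ℕ).Product E) θ.exs
      fun i => Term.realize (M := (Filter.hyperfilter ℕ : Filter ℕ).Product E) default (τ (p i))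
    rw [BoundedFormula.realize_exs]
    exact ⟨_, hσΩ⟩
  · intro h
    by_contra hc
    rw [BoundedFormula.realize_exs] at hc
    push_neg at hc
    have hGψ : ∀ ys : Fin m → G,
        ((θ.subst fun i => τ (p i)).not).Realize (default : Empty → G) ys := by
      intro ys
      rw [BoundedFormula.realize_not, BoundedFormula.realize_subst]
      have hp : (fun i => (τ (p i)).realize (default : Empty → G)) = p := by
        funext i; exact hτ (p i)
      rw [hp]
      exact hc ys
    have hΩψ := key m _ ((isQF_subst hθ _).not) hGψ
    have h2 : Formula.Realize (M := (Filter.hyperfilter ℕ : Filter ℕ).Product E) θ.exs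
        (fun i =>
          Term.realize (M := (Filter.hyperfilter ℕ : Filter ℕ).Product E) default (τ (p i))) := h
    rw [BoundedFormula.realize_exs] at h2
    obtain ⟨ys, hys⟩ := h2
    have h3 := hΩψ ys
    rw [BoundedFormula.realize_not, BoundedFormula.realize_subst] at h3
    exact h3 hys

end Stmt13
end

section
/- Let L be the language of groups expanded by constant symbols c₁,…,c_d, and let G be a group generated by d elements named by c₁,…,c_d that is Σ₁-pseudofinite with respect to L. Let w be an element of the free group F_k on x₁,…,x_k (a group word in k variables), and suppose w is r-bounded for d, i.e., for every finite group H generated by d elements one has w(H) = w^{*r}(H). Then w(G) = w^{*r}(G): every element of the verbal subgroup of G determined by w is a product of at most r values of w or inverses of values of w. -/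
open FirstOrder Language

namespace Stmt14

/-- Function symbols of the language of groups expanded by `d` constant symbols
`c 1, …, c d`. -/
inductive GroupFunc (d : ℕ) : ℕ → Type
  | mul : GroupFunc d 2
  | inv : GroupFunc d 1
  | one : GroupFunc d 0
  | c (i : Fin d) : GroupFunc d 0

/-- The language of groups expanded by `d` constant symbols; no relation symbols. -/
def grpLang (d : ℕ) : FirstOrder.Language :=
  ⟨GroupFunc d, fun _ => Empty⟩

/-- The natural `grpLang d`-structure on a group `G` with the constants `c i` interpreted
as the distinguished generators `g i`. -/
def grpStructure (d : ℕ) (G : Type*) [Group G] (g : Fin d → G) : (grpLang d).Structure G where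
  funMap {n} f x :=
    match f with
    | .mul => x 0 * x 1
    | .inv => (x 0)⁻¹
    | .one => 1
    | .c i => g i
  RelMap {n} r := r.elim

/-- `φ` holds in `M` when `M` carries the `L`-structure `S`. -/
def SentenceHoldsIn (L : FirstOrder.Language) (M : Type*) (S : L.Structure M)
    (φ : L.Sentence) : Prop :=
  letI := S
  M ⊨ φ

/-- `M` (with `L`-structure `S`) is `Σ₁`-pseudofinite: every existential closure of a
quantifier-free formula that holds in every finite nonempty `L`-structure holds in `M`. -/
def SigmaOnePseudofinite (L : FirstOrder.Language) (M : Type*) (S : L.Structure M) : Prop :=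
  ∀ (m : ℕ) (θ : L.BoundedFormula Empty m), θ.IsQF →
    (∀ (E : Type) (SE : L.Structure E), Nonempty E → Finite E →
      SentenceHoldsIn L E SE θ.exs) →
    SentenceHoldsIn L M S θ.exs

/-- The set of values of the group word `w` in a group `M`. -/
def wordValues {k : ℕ} (w : FreeGroup (Fin k)) (M : Type*) [Group M] : Set M :=
  {x | ∃ v : Fin k → M, FreeGroup.lift v w = x}

/-- The verbal subgroup `w(M)` determined by the word `w`: the subgroup generated by all
values of `w`. -/
def verbalSubgroup {k : ℕ} (w : FreeGroup (Fin k)) (M : Type*) [Group M] : Subgroup M :=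
  Subgroup.closure (wordValues w M)

/-- `w^{*r}(M)`: the set of products of at most `r` elements, each of which is a value of
`w` or the inverse of a value of `w`. -/
def wordProducts {k : ℕ} (w : FreeGroup (Fin k)) (r : ℕ) (M : Type*) [Group M] : Set M :=
  {x | ∃ l : List M, l.length ≤ r ∧
    (∀ y ∈ l, y ∈ wordValues w M ∨ y⁻¹ ∈ wordValues w M) ∧ l.prod = x}

/-! ### Auxiliary machinery -/

section Aux

variable {d k : ℕ} {M : Type*}

/-- The canonical empty assignment. -/
def eelim {M : Type*} : Empty → M := fun e => e.elim

/-- Multiplication term. -/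
def tmul {α : Type*} (t₁ t₂ : (grpLang d).Term α) : (grpLang d).Term α :=
  Term.func (GroupFunc.mul : (grpLang d).Functions 2) ![t₁, t₂]

/-- Inverse term. -/
def tinv {α : Type*} (t : (grpLang d).Term α) : (grpLang d).Term α :=
  Term.func (GroupFunc.inv : (grpLang d).Functions 1) ![t]

/-- Identity term. -/
def tone {α : Type*} : (grpLang d).Term α :=
  Term.func (GroupFunc.one : (grpLang d).Functions 0) ![]

/-- Constant term. -/
def tc {α : Type*} (i : Fin d) : (grpLang d).Term α :=
  Term.func (GroupFunc.c i : (grpLang d).Functions 0) ![]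

/-- Compatibility of a `grpLang d`-structure with given algebraic operations and
distinguished generators. -/
structure Compat (d : ℕ) (M : Type*) [Mul M] [Inv M] [One M]
    [(grpLang d).Structure M] (g : Fin d → M) : Prop where
  mul : ∀ x : Fin 2 → M, Structure.funMap (L := grpLang d) GroupFunc.mul x = x 0 * x 1
  inv : ∀ x : Fin 1 → M, Structure.funMap (L := grpLang d) GroupFunc.inv x = (x 0)⁻¹
  one : ∀ x : Fin 0 → M, Structure.funMap (L := grpLang d) GroupFunc.one x = 1
  c : ∀ (i : Fin d) (x : Fin 0 → M), Structure.funMap (L := grpLang d) (GroupFunc.c i) x = g i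

section RealizeOps

variable [Mul M] [Inv M] [One M] [(grpLang d).Structure M] {g : Fin d → M}

theorem realize_tmul (hc : Compat d M g) {α : Type*} (v : α → M)
    (t₁ t₂ : (grpLang d).Term α) :
    (tmul t₁ t₂).realize v = t₁.realize v * t₂.realize v := by
  rw [tmul]; refine (hc.mul _).trans ?_
  simp

theorem realize_tinv (hc : Compat d M g) {α : Type*} (v : α → M)
    (t : (grpLang d).Term α) :
    (tinv t).realize v = (t.realize v)⁻¹ := by
  rw [tinv]; refine (hc.inv _).trans ?_
  simp

theorem realize_tone (hc : Compat d M g) {α : Type*} (v : α → M) :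
    (tone : (grpLang d).Term α).realize v = 1 := by
  rw [tone]; exact hc.one _

theorem realize_tc (hc : Compat d M g) {α : Type*} (v : α → M) (i : Fin d) :
    (tc i : (grpLang d).Term α).realize v = g i := by
  rw [tc]; exact hc.c _ _

theorem realize_listProd (hc : Compat d M g) {α : Type*} (v : α → M)
    (l : List ((grpLang d).Term α)) :
    ((l.foldr tmul tone).realize v) = (l.map (Term.realize v)).prod := by
  induction l with
  | nil => simp [realize_tone hc]
  | cons t l ih => simp [realize_tmul hc, ih]

end RealizeOps

/-- The term expressing the word `w` applied to the terms `v i`. -/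
def wTerm (w : FreeGroup (Fin k)) {α : Type*} (v : Fin k → (grpLang d).Term α) :
    (grpLang d).Term α :=
  (w.toWord.map fun p => cond p.2 (v p.1) (tinv (v p.1))).foldr tmul tone

theorem realize_wTerm [Group M] [(grpLang d).Structure M] {g : Fin d → M}
    (hc : Compat d M g) (w : FreeGroup (Fin k)) {α : Type*}
    (vt : Fin k → (grpLang d).Term α) (v : α → M) :
    (wTerm w vt).realize v = FreeGroup.lift (fun i => (vt i).realize v) w := by
  conv_rhs => rw [← FreeGroup.mk_toWord (x := w), FreeGroup.lift_mk]
  rw [wTerm, realize_listProd hc, List.map_map]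
  refine congrArg List.prod (List.map_congr_left ?_)
  rintro ⟨i, b⟩ _
  cases b <;> simp [realize_tinv hc]

/-- Any closed term evaluates into the subgroup generated by the distinguished elements. -/
theorem realize_mem_closure [Group M] [(grpLang d).Structure M] {g : Fin d → M}
    (hc : Compat d M g) (t : (grpLang d).Term Empty) :
    t.realize (eelim : Empty → M) ∈ Subgroup.closure (Set.range g) := by
  induction t with
  | var v => exact v.elim
  | func f ts ih =>
    cases f with
    | mul => show Structure.funMap (L := grpLang d) GroupFunc.mul _ ∈ _; rw [hc.mul]; exact mul_mem (ih 0) (ih 1)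
    | inv => show Structure.funMap (L := grpLang d) GroupFunc.inv _ ∈ _; rw [hc.inv]; exact inv_mem (ih 0)
    | one => show Structure.funMap (L := grpLang d) GroupFunc.one _ ∈ _; rw [hc.one]; exact one_mem _
    | c i => show Structure.funMap (L := grpLang d) (GroupFunc.c i) _ ∈ _; rw [hc.c]; exact Subgroup.subset_closure ⟨i, rfl⟩

/-- If the distinguished elements generate, every element is the value of a closed term. -/
theorem exists_term [Group M] [(grpLang d).Structure M] {g : Fin d → M}
    (hc : Compat d M g) (hgen : Subgroup.closure (Set.range g) = ⊤) (x : M) :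
    ∃ t : (grpLang d).Term Empty, t.realize (eelim : Empty → M) = x := by
  let T : Subgroup M :=
    { carrier := {x | ∃ t : (grpLang d).Term Empty, t.realize (eelim : Empty → M) = x}
      one_mem' := ⟨tone, realize_tone hc _⟩
      mul_mem' := by
        rintro a b ⟨t₁, rfl⟩ ⟨t₂, rfl⟩
        exact ⟨tmul t₁ t₂, realize_tmul hc _ _ _⟩
      inv_mem' := by
        rintro a ⟨t, rfl⟩
        exact ⟨tinv t, realize_tinv hc _ _⟩ }
  have hle : Subgroup.closure (Set.range g) ≤ T := by
    rw [Subgroup.closure_le]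
    rintro _ ⟨i, rfl⟩
    exact ⟨tc i, realize_tc hc _ _⟩
  exact hle (hgen ▸ Subgroup.mem_top x)

/-- The big closed term: a product of signed word-terms. -/
def bigTerm (w : FreeGroup (Fin k)) (L : List (Bool × (Fin k → (grpLang d).Term Empty))) :
    (grpLang d).Term Empty :=
  (L.map fun p => cond p.1 (wTerm w p.2) (tinv (wTerm w p.2))).foldr tmul tone

theorem lift_coe [Group M] (H : Subgroup M) (v : Fin k → H) (w : FreeGroup (Fin k)) :
    ((FreeGroup.lift v w : H) : M) = FreeGroup.lift (fun i => (v i : M)) w := by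
  have h : H.subtype.comp (FreeGroup.lift v) = FreeGroup.lift (fun i => (v i : M)) :=
    FreeGroup.ext_hom _ _ (fun a => by simp)
  simpa using DFunLike.congr_fun h w

theorem lift_one [Group M] (w : FreeGroup (Fin k)) :
    FreeGroup.lift (fun _ : Fin k => (1 : M)) w = 1 := by
  have h : FreeGroup.lift (fun _ : Fin k => (1 : M)) = 1 :=
    FreeGroup.ext_hom _ _ (fun a => by simp)
  rw [h, MonoidHom.one_apply]

/-- Every element of the verbal subgroup is the value of some `bigTerm`. -/
theorem exists_bigTerm [Group M] [(grpLang d).Structure M] {g : Fin d → M}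
    (hc : Compat d M g) (hgen : Subgroup.closure (Set.range g) = ⊤)
    (w : FreeGroup (Fin k)) {x : M} (hx : x ∈ verbalSubgroup w M) :
    ∃ L : List (Bool × (Fin k → (grpLang d).Term Empty)),
      (bigTerm w L).realize (eelim : Empty → M) = x := by
  rw [verbalSubgroup, ← Subgroup.mem_toSubmonoid, Subgroup.closure_toSubmonoid] at hx
  obtain ⟨l, hl, rfl⟩ := Submonoid.exists_list_of_mem_closure hx
  clear hx
  induction l with
  | nil => exact ⟨[], by simp [bigTerm, realize_tone hc]⟩
  | cons y t ih =>
    obtain ⟨Lt, hLt⟩ := ih (fun z hz => hl z (List.mem_cons_of_mem _ hz))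
    have hy := hl y (List.mem_cons_self)
    have hex : ∃ (b : Bool) (vt : Fin k → (grpLang d).Term Empty),
        cond b (FreeGroup.lift (fun i => (vt i).realize (eelim : Empty → M)) w)
          (FreeGroup.lift (fun i => (vt i).realize (eelim : Empty → M)) w)⁻¹ = y := by
      rcases hy with h | h
      · obtain ⟨v, hv⟩ := h
        choose vt hvt using fun i => exists_term hc hgen (v i)
        refine ⟨true, vt, ?_⟩
        rw [cond_true, show (fun i => (vt i).realize (eelim : Empty → M)) = v from
          funext hvt, hv]
      · rw [Set.mem_inv] at h
        obtain ⟨v, hv⟩ := h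
        choose vt hvt using fun i => exists_term hc hgen (v i)
        refine ⟨false, vt, ?_⟩
        rw [cond_false, show (fun i => (vt i).realize (eelim : Empty → M)) = v from
          funext hvt, hv, inv_inv]
    obtain ⟨b, vt, hb⟩ := hex
    refine ⟨(b, vt) :: Lt, ?_⟩
    have hcons : bigTerm w ((b, vt) :: Lt) =
        tmul (cond b (wTerm w vt) (tinv (wTerm w vt))) (bigTerm w Lt) := by
      simp [bigTerm]
    rw [hcons, realize_tmul hc, hLt, List.prod_cons, ← hb]
    cases b <;> simp [realize_wTerm hc, realize_tinv hc]

/-- The value of `bigTerm` lies in the verbal subgroup of the generated subgroup. -/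
theorem bigTerm_mem_verbal [Group M] [(grpLang d).Structure M] {g : Fin d → M}
    (hc : Compat d M g) (w : FreeGroup (Fin k))
    (L : List (Bool × (Fin k → (grpLang d).Term Empty)))
    (hmem : (bigTerm w L).realize (eelim : Empty → M) ∈ Subgroup.closure (Set.range g)) :
    (⟨_, hmem⟩ : Subgroup.closure (Set.range g)) ∈
      verbalSubgroup w (Subgroup.closure (Set.range g)) := by
  induction L with
  | nil =>
    have h1 : (⟨_, hmem⟩ : Subgroup.closure (Set.range g)) = 1 :=
      Subtype.ext (by simp [bigTerm, realize_tone hc])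
    rw [h1]; exact one_mem _
  | cons p Lt ih =>
    obtain ⟨b, vt⟩ := p
    have hvm : ∀ i, (vt i).realize (eelim : Empty → M) ∈ Subgroup.closure (Set.range g) :=
      fun i => realize_mem_closure hc _
    let vH : Fin k → Subgroup.closure (Set.range g) := fun i => ⟨_, hvm i⟩
    have hW : ((FreeGroup.lift vH w : Subgroup.closure (Set.range g)) : M)
        = FreeGroup.lift (fun i => (vt i).realize (eelim : Empty → M)) w :=
      lift_coe _ _ _
    have hmt : (bigTerm w Lt).realize (eelim : Empty → M) ∈ Subgroup.closure (Set.range g) :=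
      realize_mem_closure hc _
    have hcons : (bigTerm w ((b, vt) :: Lt)).realize (eelim : Empty → M)
        = (cond b (wTerm w vt) (tinv (wTerm w vt))).realize (eelim : Empty → M)
          * (bigTerm w Lt).realize (eelim : Empty → M) := by
      have : bigTerm w ((b, vt) :: Lt) =
          tmul (cond b (wTerm w vt) (tinv (wTerm w vt))) (bigTerm w Lt) := by
        simp [bigTerm]
      rw [this, realize_tmul hc]
    have ha : (cond b (wTerm w vt) (tinv (wTerm w vt))).realize (eelim : Empty → M)
        ∈ Subgroup.closure (Set.range g) := by
      cases b
      · simp only [cond_false, realize_tinv hc, realize_wTerm hc]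
        exact inv_mem (hW ▸ (FreeGroup.lift vH w).2)
      · simp only [cond_true, realize_wTerm hc]
        exact hW ▸ (FreeGroup.lift vH w).2
    have hkey : (⟨_, hmem⟩ : Subgroup.closure (Set.range g)) = ⟨_, ha⟩ * ⟨_, hmt⟩ :=
      Subtype.ext (by exact hcons)
    rw [hkey]
    refine mul_mem ?_ (ih hmt)
    have hval : (⟨FreeGroup.lift (fun i => (vt i).realize (eelim : Empty → M)) w,
        hW ▸ (FreeGroup.lift vH w).2⟩ : Subgroup.closure (Set.range g))
        ∈ wordValues w (Subgroup.closure (Set.range g)) :=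
      ⟨vH, Subtype.ext hW⟩
    cases b
    · have h2 : (⟨_, ha⟩ : Subgroup.closure (Set.range g))
          = (⟨_, hW ▸ (FreeGroup.lift vH w).2⟩ :
              Subgroup.closure (Set.range g))⁻¹ :=
        Subtype.ext (by simp [realize_tinv hc, realize_wTerm hc])
      rw [h2]
      exact inv_mem (Subgroup.subset_closure hval)
    · have h2 : (⟨_, ha⟩ : Subgroup.closure (Set.range g))
          = ⟨_, hW ▸ (FreeGroup.lift vH w).2⟩ :=
        Subtype.ext (by simp [realize_wTerm hc])
      rw [h2]
      exact Subgroup.subset_closure hval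

end Aux

section Aux2

variable {d k : ℕ} {M : Type*}

theorem signed_list_aux [Group M] (w : FreeGroup (Fin k)) (l : List M) :
    ∀ r : ℕ, l.length ≤ r →
      (∀ y ∈ l, y ∈ wordValues w M ∨ y⁻¹ ∈ wordValues w M) →
      ∃ (σ : Fin r → Bool) (u : Fin r → Fin k → M),
        (List.ofFn fun j => cond (σ j) (FreeGroup.lift (u j) w)
          (FreeGroup.lift (u j) w)⁻¹).prod = l.prod := by
  induction l with
  | nil =>
    intro r _ _
    exact ⟨fun _ => true, fun _ _ => 1, by simp [lift_one]⟩
  | cons y t ih =>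
    intro r hlen hmem
    cases r with
    | zero => simp at hlen
    | succ r' =>
      obtain ⟨σ', u', hσ'⟩ := ih r' (by simpa using hlen)
        (fun z hz => hmem z (List.mem_cons_of_mem _ hz))
      have hy := hmem y (List.mem_cons_self)
      have hex : ∃ (b : Bool) (v : Fin k → M),
          cond b (FreeGroup.lift v w) (FreeGroup.lift v w)⁻¹ = y := by
        rcases hy with ⟨v, hv⟩ | ⟨v, hv⟩
        · exact ⟨true, v, hv⟩
        · exact ⟨false, v, by rw [cond_false, hv, inv_inv]⟩
      obtain ⟨b, v, hb⟩ := hex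
      refine ⟨Fin.cons b σ', Fin.cons v u', ?_⟩
      rw [List.ofFn_succ]
      simp only [Fin.cons_zero, Fin.cons_succ, List.prod_cons]
      rw [hb, hσ']

theorem mem_wordProducts_iff [Group M] {w : FreeGroup (Fin k)} {r : ℕ} {x : M} :
    x ∈ wordProducts w r M ↔ ∃ (σ : Fin r → Bool) (u : Fin r → Fin k → M),
      (List.ofFn fun j => cond (σ j) (FreeGroup.lift (u j) w)
        (FreeGroup.lift (u j) w)⁻¹).prod = x := by
  constructor
  · rintro ⟨l, hlen, hmem, rfl⟩
    exact signed_list_aux w l r hlen hmem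
  · rintro ⟨σ, u, rfl⟩
    refine ⟨List.ofFn _, by simp, ?_, rfl⟩
    intro y hy
    rw [List.mem_ofFn] at hy
    obtain ⟨j, hj⟩ := hy
    cases hσ : σ j
    · simp only [hσ, cond_false] at hj
      exact Or.inr ⟨u j, by rw [← hj, inv_inv]⟩
    · simp only [hσ, cond_true] at hj
      exact Or.inl ⟨u j, hj⟩

/-- Index of the `i`-th argument of the `j`-th word factor among the bound variables. -/
def uvar (r k : ℕ) (j : Fin r) (i : Fin k) : Fin (3 + r * k) :=
  Fin.natAdd 3 (finProdFinEquiv (j, i))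

/-- Index of the `i`-th variable used for witnessing failure of a group axiom. -/
def avar (r k : ℕ) (i : Fin 3) : Fin (3 + r * k) := Fin.castAdd (r * k) i

/-- The `j`-th word factor as a term. -/
def wtermAt (w : FreeGroup (Fin k)) (r : ℕ) (j : Fin r) :
    (grpLang d).Term (Empty ⊕ Fin (3 + r * k)) :=
  wTerm w fun i => Term.var (Sum.inr (uvar r k j i))

/-- The equation `s = ∏ w(u_j)^{σ j}`. -/
def eqnFormula (w : FreeGroup (Fin k)) (L : List (Bool × (Fin k → (grpLang d).Term Empty)))
    (r : ℕ) (σ : Fin r → Bool) : (grpLang d).BoundedFormula Empty (3 + r * k) :=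
  Term.bdEqual ((bigTerm w L).relabel Sum.inl)
    ((List.ofFn fun j => cond (σ j) (wtermAt w r j) (tinv (wtermAt w r j))).foldr tmul tone)

/-- The quantifier-free matrix of the `Σ₁` sentence. -/
noncomputable def matrixFormula (w : FreeGroup (Fin k)) (L : List (Bool × (Fin k → (grpLang d).Term Empty)))
    (r : ℕ) : (grpLang d).BoundedFormula Empty (3 + r * k) :=
  (Term.bdEqual
      (tmul (tmul (Term.var (Sum.inr (avar r k 0))) (Term.var (Sum.inr (avar r k 1))))
        (Term.var (Sum.inr (avar r k 2))))
      (tmul (Term.var (Sum.inr (avar r k 0)))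
        (tmul (Term.var (Sum.inr (avar r k 1))) (Term.var (Sum.inr (avar r k 2)))))).not ⊔
  ((Term.bdEqual (tmul tone (Term.var (Sum.inr (avar r k 0))))
      (Term.var (Sum.inr (avar r k 0)))).not ⊔
  ((Term.bdEqual (tmul (tinv (Term.var (Sum.inr (avar r k 0))))
      (Term.var (Sum.inr (avar r k 0)))) tone).not ⊔
    (((Finset.univ : Finset (Fin r → Bool)).toList.map (eqnFormula w L r)).foldr (· ⊔ ·) ⊥)))

theorem matrix_isQF (w : FreeGroup (Fin k))
    (L : List (Bool × (Fin k → (grpLang d).Term Empty))) (r : ℕ) :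
    (matrixFormula w L r).IsQF := by
  have hfold : ∀ l : List ((grpLang d).BoundedFormula Empty (3 + r * k)),
      (∀ φ ∈ l, φ.IsQF) → (l.foldr (· ⊔ ·) ⊥).IsQF := by
    intro l
    induction l with
    | nil => intro _; exact BoundedFormula.isQF_bot
    | cons a t ih =>
      intro h
      exact (h a (List.mem_cons_self)).sup (ih fun φ hφ => h φ (List.mem_cons_of_mem _ hφ))
  refine BoundedFormula.IsQF.sup ((BoundedFormula.IsAtomic.equal _ _).isQF.not)
    (BoundedFormula.IsQF.sup ((BoundedFormula.IsAtomic.equal _ _).isQF.not)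
      (BoundedFormula.IsQF.sup ((BoundedFormula.IsAtomic.equal _ _).isQF.not)
        (hfold _ ?_)))
  intro φ hφ
  rw [List.mem_map] at hφ
  obtain ⟨σ, _, rfl⟩ := hφ
  exact (BoundedFormula.IsAtomic.equal _ _).isQF

theorem realize_term_empty_congr [(grpLang d).Structure M] (t : (grpLang d).Term Empty)
    (v v' : Empty → M) : t.realize v = t.realize v' := by
  have h : v = v' := funext fun e => e.elim
  rw [h]

theorem realize_eqnFormula [Group M] [(grpLang d).Structure M] {g : Fin d → M}
    (hc : Compat d M g) (w : FreeGroup (Fin k))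
    (L : List (Bool × (Fin k → (grpLang d).Term Empty))) {r : ℕ} (σ : Fin r → Bool)
    (v : Empty → M) (xs : Fin (3 + r * k) → M) :
    (eqnFormula w L r σ).Realize v xs ↔
      (bigTerm w L).realize (eelim : Empty → M) =
        (List.ofFn fun j => cond (σ j) (FreeGroup.lift (fun i => xs (uvar r k j i)) w)
          (FreeGroup.lift (fun i => xs (uvar r k j i)) w)⁻¹).prod := by
  rw [eqnFormula, BoundedFormula.realize_bdEqual]
  have h1 : ((bigTerm w L).relabel Sum.inl).realize (Sum.elim v xs)
      = (bigTerm w L).realize (eelim : Empty → M) := by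
    rw [Term.realize_relabel]
    have hv : (Sum.elim v xs ∘ Sum.inl : Empty → M) = eelim := funext fun e => e.elim
    rw [hv]
  have h2 : ((List.ofFn fun j => cond (σ j) (wtermAt (d := d) w r j)
        (tinv (wtermAt (d := d) w r j))).foldr tmul tone).realize (Sum.elim v xs)
      = (List.ofFn fun j => cond (σ j) (FreeGroup.lift (fun i => xs (uvar r k j i)) w)
          (FreeGroup.lift (fun i => xs (uvar r k j i)) w)⁻¹).prod := by
    rw [realize_listProd hc, List.map_ofFn]
    refine congrArg List.prod (congrArg List.ofFn ?_)
    funext j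
    cases hσ : σ j <;>
      simp [Function.comp, hσ, wtermAt, realize_wTerm hc, realize_tinv hc, Term.realize_var]
  rw [h1, h2]

end Aux2

/-- Let `G` be a group generated by `d` elements named by the constants of
`grpLang d`, and suppose `G` is `Σ₁`-pseudofinite with respect to this language.  Let
`w ∈ F_k` be a group word that is `r`-bounded for `d`, i.e. `w(H) = w^{*r}(H)` for every
finite `d`-generated group `H`.  Then `w(G) = w^{*r}(G)`. -/
theorem stmt_14 (d r k : ℕ) (G : Type) [Group G] (g : Fin d → G)
    (hgen : Subgroup.closure (Set.range g) = ⊤)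
    (hpsf : SigmaOnePseudofinite (grpLang d) G (grpStructure d G g))
    (w : FreeGroup (Fin k))
    (hbound : ∀ (H : Type) [Group H] [Finite H],
      (∃ h : Fin d → H, Subgroup.closure (Set.range h) = ⊤) →
      (verbalSubgroup w H : Set H) = wordProducts w r H) :
    (verbalSubgroup w G : Set G) = wordProducts w r G := by
  refine Set.Subset.antisymm ?_ ?_
  swap
  · -- `w^{*r}(G) ⊆ w(G)`
    rintro x ⟨l, -, hmem, rfl⟩
    refine Subgroup.list_prod_mem _ fun y hy => ?_
    rcases hmem y hy with h | h
    · exact Subgroup.subset_closure h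
    · have h2 := inv_mem (Subgroup.subset_closure h : y⁻¹ ∈ verbalSubgroup w G)
      rwa [inv_inv] at h2
  · -- `w(G) ⊆ w^{*r}(G)`
    intro x hx
    letI : (grpLang d).Structure G := grpStructure d G g
    have hcG : Compat d G g := ⟨fun _ => rfl, fun _ => rfl, fun _ => rfl, fun _ _ => rfl⟩
    obtain ⟨L, hL⟩ := exists_bigTerm hcG hgen w hx
    have hfin : ∀ (E : Type) (SE : (grpLang d).Structure E), Nonempty E → Finite E →
        SentenceHoldsIn (grpLang d) E SE (matrixFormula w L r).exs := by
      intro E SE hne hfinE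
      letI := SE
      letI := hfinE
      letI : Mul E := ⟨fun a b => Structure.funMap (L := grpLang d) GroupFunc.mul ![a, b]⟩
      letI : One E := ⟨Structure.funMap (L := grpLang d) GroupFunc.one ![]⟩
      letI : Inv E := ⟨fun a => Structure.funMap (L := grpLang d) GroupFunc.inv ![a]⟩
      have hvec2 : ∀ x : Fin 2 → E, x = ![x 0, x 1] := by
        intro x; funext i; fin_cases i <;> rfl
      have hvec1 : ∀ x : Fin 1 → E, x = ![x 0] := by
        intro x; funext i; fin_cases i <;> rfl
      have hvec0 : ∀ x : Fin 0 → E, x = ![] := by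
        intro x; funext i; exact i.elim0
      show (letI := SE; E ⊨ (matrixFormula w L r).exs)
      refine BoundedFormula.realize_exs.mpr ?_
      by_cases hP : (∀ a b c : E, a * b * c = a * (b * c)) ∧ (∀ a : E, 1 * a = a)
          ∧ (∀ a : E, a⁻¹ * a = 1)
      · obtain ⟨hassoc, honemul, hinvmul⟩ := hP
        letI : Group E := Group.ofLeftAxioms hassoc honemul hinvmul
        have hcE : Compat d E
            (fun i => Structure.funMap (L := grpLang d) (GroupFunc.c i) ![]) := by
          refine ⟨fun x => ?_, fun x => ?_, fun x => ?_, fun i x => ?_⟩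
          · conv_lhs => rw [hvec2 x]
            rfl
          · conv_lhs => rw [hvec1 x]
            rfl
          · conv_lhs => rw [hvec0 x]
            rfl
          · conv_lhs => rw [hvec0 x]
        set cE : Fin d → E :=
          fun i => Structure.funMap (L := grpLang d) (GroupFunc.c i) ![] with hcEdef
        set H : Subgroup E := Subgroup.closure (Set.range cE) with hHdef
        have hgenH : ∃ h : Fin d → H, Subgroup.closure (Set.range h) = ⊤ := by
          refine ⟨fun i => ⟨cE i, Subgroup.subset_closure ⟨i, rfl⟩⟩, ?_⟩
          have hr : Set.range (fun i => (⟨cE i, Subgroup.subset_closure ⟨i, rfl⟩⟩ : H))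
              = ((↑) : H → E) ⁻¹' (Set.range cE) := by
            ext z
            constructor
            · rintro ⟨i, rfl⟩; exact ⟨i, rfl⟩
            · rintro ⟨i, hi⟩; exact ⟨i, Subtype.ext hi⟩
          rw [hr, hHdef]
          exact Subgroup.closure_closure_coe_preimage
        have hbH := hbound H hgenH
        have hmemE : (bigTerm w L).realize (eelim : Empty → E) ∈ H :=
          realize_mem_closure hcE _
        have hverb := bigTerm_mem_verbal hcE w L hmemE
        have hwp : (⟨_, hmemE⟩ : H) ∈ wordProducts w r H := by
          rw [← hbH]; exact hverb
        obtain ⟨σ, uH, huH⟩ := mem_wordProducts_iff.mp hwp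
        have hprod : (List.ofFn fun j => cond (σ j)
              (FreeGroup.lift (fun i => (uH j i : E)) w)
              (FreeGroup.lift (fun i => (uH j i : E)) w)⁻¹).prod
            = (bigTerm w L).realize (eelim : Empty → E) := by
          have hkey : (List.ofFn fun j => cond (σ j)
                (FreeGroup.lift (fun i => (uH j i : E)) w)
                (FreeGroup.lift (fun i => (uH j i : E)) w)⁻¹)
              = List.map ((↑) : H → E) (List.ofFn fun j => cond (σ j)
                  (FreeGroup.lift (uH j) w) (FreeGroup.lift (uH j) w)⁻¹) := by
            rw [List.map_ofFn]
            refine congrArg List.ofFn (funext fun j => ?_)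
            cases hσ : σ j <;> simp [Function.comp, hσ, lift_coe]
          rw [hkey, ← SubmonoidClass.coe_list_prod, huH]
        let xs : Fin (3 + r * k) → E := Fin.append
          (fun _ : Fin 3 => (bigTerm w L).realize (eelim : Empty → E))
          (fun p => (uH (finProdFinEquiv.symm p).1 (finProdFinEquiv.symm p).2 : E))
        have hxv : ∀ (j : Fin r) (i : Fin k), xs (uvar r k j i) = (uH j i : E) := by
          intro j i
          show Fin.append _ _ (Fin.natAdd 3 (finProdFinEquiv (j, i))) = _
          rw [Fin.append_right]
          simp
        refine ⟨xs, ?_⟩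
        rw [matrixFormula]
        refine BoundedFormula.realize_sup.mpr (Or.inr ?_)
        refine BoundedFormula.realize_sup.mpr (Or.inr ?_)
        refine BoundedFormula.realize_sup.mpr (Or.inr ?_)
        refine (BoundedFormula.realize_foldr_sup _ _ _).mpr
          ⟨eqnFormula w L r σ,
            List.mem_map_of_mem (Finset.mem_toList.mpr (Finset.mem_univ σ)), ?_⟩
        rw [realize_eqnFormula hcE, ← hprod]
        refine congrArg List.prod (congrArg List.ofFn (funext fun j => ?_))
        cases hσ : σ j <;> simp [hσ, hxv]
      · -- some group axiom fails: witness its failure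
        rcases not_and_or.mp hP with hA | hBC
        · push_neg at hA
          obtain ⟨a, b, c, hno⟩ := hA
          refine ⟨Fin.append ![a, b, c] (fun _ => a), ?_⟩
          rw [matrixFormula]
          refine BoundedFormula.realize_sup.mpr (Or.inl ?_)
          rw [BoundedFormula.realize_not, BoundedFormula.realize_bdEqual]
          intro hcontra
          apply hno
          have hcE : Compat d E
              (fun i => Structure.funMap (L := grpLang d) (GroupFunc.c i) ![]) := by
            refine ⟨fun x => ?_, fun x => ?_, fun x => ?_, fun i x => ?_⟩
            · conv_lhs => rw [hvec2 x]
              rfl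
            · conv_lhs => rw [hvec1 x]
              rfl
            · conv_lhs => rw [hvec0 x]
              rfl
            · conv_lhs => rw [hvec0 x]
          simpa [realize_tmul hcE, Term.realize_var, avar, Fin.append_left] using hcontra
        · have hcE : Compat d E
              (fun i => Structure.funMap (L := grpLang d) (GroupFunc.c i) ![]) := by
            refine ⟨fun x => ?_, fun x => ?_, fun x => ?_, fun i x => ?_⟩
            · conv_lhs => rw [hvec2 x]
              rfl
            · conv_lhs => rw [hvec1 x]
              rfl
            · conv_lhs => rw [hvec0 x]
              rfl
            · conv_lhs => rw [hvec0 x]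
          rcases not_and_or.mp hBC with hB | hC
          · push_neg at hB
            obtain ⟨a, hno⟩ := hB
            refine ⟨Fin.append ![a, a, a] (fun _ => a), ?_⟩
            rw [matrixFormula]
            refine BoundedFormula.realize_sup.mpr (Or.inr ?_)
            refine BoundedFormula.realize_sup.mpr (Or.inl ?_)
            rw [BoundedFormula.realize_not, BoundedFormula.realize_bdEqual]
            intro hcontra
            apply hno
            simpa [realize_tmul hcE, realize_tone hcE, Term.realize_var, avar,
              Fin.append_left] using hcontra
          · push_neg at hC
            obtain ⟨a, hno⟩ := hC
            refine ⟨Fin.append ![a, a, a] (fun _ => a), ?_⟩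
            rw [matrixFormula]
            refine BoundedFormula.realize_sup.mpr (Or.inr ?_)
            refine BoundedFormula.realize_sup.mpr (Or.inr ?_)
            refine BoundedFormula.realize_sup.mpr (Or.inl ?_)
            rw [BoundedFormula.realize_not, BoundedFormula.realize_bdEqual]
            intro hcontra
            apply hno
            simpa [realize_tmul hcE, realize_tinv hcE, realize_tone hcE, Term.realize_var,
              avar, Fin.append_left] using hcontra
    have hsent := hpsf (3 + r * k) (matrixFormula w L r) (matrix_isQF w L r) hfin
    have hsent' : (letI : (grpLang d).Structure G := grpStructure d G g;
        G ⊨ (matrixFormula w L r).exs) := hsent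
    obtain ⟨xs, hxs⟩ := BoundedFormula.realize_exs.mp hsent'
    rw [matrixFormula] at hxs
    rcases BoundedFormula.realize_sup.mp hxs with h | hxs
    · exfalso
      rw [BoundedFormula.realize_not, BoundedFormula.realize_bdEqual] at h
      exact h (by simp [realize_tmul hcG, Term.realize_var, mul_assoc])
    rcases BoundedFormula.realize_sup.mp hxs with h | hxs
    · exfalso
      rw [BoundedFormula.realize_not, BoundedFormula.realize_bdEqual] at h
      exact h (by simp [realize_tmul hcG, realize_tone hcG, Term.realize_var])
    rcases BoundedFormula.realize_sup.mp hxs with h | hxs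
    · exfalso
      rw [BoundedFormula.realize_not, BoundedFormula.realize_bdEqual] at h
      exact h (by simp [realize_tmul hcG, realize_tinv hcG, realize_tone hcG,
        Term.realize_var])
    obtain ⟨φ, hφmem, hφ⟩ := (BoundedFormula.realize_foldr_sup _ _ _).mp hxs
    rw [List.mem_map] at hφmem
    obtain ⟨σ, -, rfl⟩ := hφmem
    rw [realize_eqnFormula hcG, hL] at hφ
    exact mem_wordProducts_iff.mpr ⟨σ, fun j i => xs (uvar r k j i), hφ.symm⟩

end Stmt14
end
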